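/- arXiv:2602.08630 — 4 statements merged into one kernel-verified Lean document; each statement's English description precedes it below -/
import Mathlib

section
/- If a Boolean function f : {0,1}^n → {0,1} depends on all its variables, then its Debate Query Complexity satisfies DQC(f) ≥ log₂(n). -/
/-- A deterministic decision tree over `m` Boolean variables. -/
inductive DT (m : ℕ) : Type where
  | leaf : Bool → DT m
  | node : Fin m → DT m → DT m → DT m

/-- Evaluation of a decision tree on an input. -/
def DT.eval {m : ℕ} : DT m → (Fin m → Bool) → Bool
  | .leaf b, _ => b
  | .node i t0 t1, x => if x i then t1.eval x else t0.eval x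

/-- Depth of a decision tree: maximum number of queries on a root-to-leaf path. -/
def DT.depth {m : ℕ} : DT m → ℕ
  | .leaf _ => 0
  | .node _ t0 t1 => max t0.depth t1.depth + 1

/-- The set of variables queried anywhere in the tree. -/
def DT.vars {m : ℕ} : DT m → Finset (Fin m)
  | .leaf _ => ∅
  | .node i t0 t1 => insert i (t0.vars ∪ t1.vars)

/-- Number of internal (query) nodes of a decision tree. -/
def DT.numNodes {m : ℕ} : DT m → ℕ
  | .leaf _ => 0
  | .node _ t0 t1 => t0.numNodes + t1.numNodes + 1

/-- `f` depends on variable `i` if flipping bit `i` can change the value of `f`. -/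
def DependsOnVar {m : ℕ} (f : (Fin m → Bool) → Bool) (i : Fin m) : Prop :=
  ∃ x : Fin m → Bool, f x ≠ f (Function.update x i (!x i))

/-- The winning condition for Prover 1: `∀ α₁ ∃ β₁ … ∀ α_k ∃ β_k, V(α,β) = true`. -/
def AWins : ℕ → (List Bool → Bool) → Prop
  | 0, V => V [] = true
  | k + 1, V => ∀ a : Bool, ∃ b : Bool, AWins k (fun t => V (a :: b :: t))

/-- The winning condition for Prover 0: `∃ α₁ ∀ β₁ … ∃ α_k ∀ β_k, V(α,β) = false`. -/
def BWins : ℕ → (List Bool → Bool) → Prop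
  | 0, V => V [] = false
  | k + 1, V => ∃ a : Bool, ∀ b : Bool, BWins k (fun t => V (a :: b :: t))

/-- Assemble the input `x` together with the `2k` transcript bits
`α₁, β₁, …, α_k, β_k` into a single input of length `n + 2k`. -/
def assemble (n k : ℕ) (x : Fin n → Bool) (t : List Bool) : Fin (n + 2 * k) → Bool :=
  fun j => if h : (j : ℕ) < n then x ⟨j, h⟩ else t.getD ((j : ℕ) - n) false

/-- A `(k,ℓ)`-debate for `f`: a verifier given by a decision tree of depth at most `ℓ`
on the input bits and the `2k` transcript bits, satisfying the alternating-quantifier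
winning conditions. -/
def IsDebate (n k ℓ : ℕ) (f : (Fin n → Bool) → Bool) : Prop :=
  ∃ T : DT (n + 2 * k), T.depth ≤ ℓ ∧
    ∀ x : Fin n → Bool,
      (f x = true → AWins k (fun t => T.eval (assemble n k x t))) ∧
      (f x = false → BWins k (fun t => T.eval (assemble n k x t)))

/-- Debate query complexity: the least verifier depth `ℓ` over all `(k,ℓ)`-debates for `f`. -/
noncomputable def DQC (n : ℕ) (f : (Fin n → Bool) → Bool) : ℕ :=
  sInf {ℓ | ∃ k, IsDebate n k ℓ f}

section Aux

lemma DT.eval_congr {m : ℕ} (T : DT m) {x y : Fin m → Bool}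
    (h : ∀ j ∈ T.vars, x j = y j) : T.eval x = T.eval y := by
  induction T with
  | leaf b => rfl
  | node i t0 t1 ih0 ih1 =>
    have hi : x i = y i := h i (by simp [DT.vars])
    simp only [DT.eval, hi]
    split
    · exact ih1 fun j hj => h j (by simp [DT.vars, hj])
    · exact ih0 fun j hj => h j (by simp [DT.vars, hj])

lemma DT.card_vars_lt {m : ℕ} (T : DT m) : T.vars.card + 1 ≤ 2 ^ T.depth := by
  induction T with
  | leaf b => simp [DT.vars, DT.depth]
  | node i t0 t1 ih0 ih1 =>
    have h1 : (insert i (t0.vars ∪ t1.vars)).card ≤ t0.vars.card + t1.vars.card + 1 := by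
      calc (insert i (t0.vars ∪ t1.vars)).card ≤ (t0.vars ∪ t1.vars).card + 1 :=
            Finset.card_insert_le _ _
        _ ≤ t0.vars.card + t1.vars.card + 1 := by
            have := Finset.card_union_le t0.vars t1.vars; omega
    have h0 : 2 ^ t0.depth ≤ 2 ^ (max t0.depth t1.depth) :=
      Nat.pow_le_pow_right (by norm_num) (le_max_left _ _)
    have h2 : 2 ^ t1.depth ≤ 2 ^ (max t0.depth t1.depth) :=
      Nat.pow_le_pow_right (by norm_num) (le_max_right _ _)
    simp only [DT.vars, DT.depth, pow_succ]
    omega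

lemma not_AWins_and_BWins : ∀ (k : ℕ) (V : List Bool → Bool), AWins k V → BWins k V → False := by
  intro k
  induction k with
  | zero => intro V hA hB; simp [AWins] at hA; simp [BWins] at hB; simp [hA] at hB
  | succ k ih =>
    intro V hA hB
    obtain ⟨a, hB⟩ := hB
    obtain ⟨b, hA⟩ := hA a
    exact ih _ hA (hB b)

/-- Build a full decision tree querying the variables in `l`. -/
def buildDT {m : ℕ} : List (Fin m) → ((Fin m → Bool) → Bool) → DT m
  | [], g => .leaf (g fun _ => false)
  | i :: l, g => .node i (buildDT l fun x => g (Function.update x i false))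
      (buildDT l fun x => g (Function.update x i true))

lemma buildDT_eval {m : ℕ} : ∀ (l : List (Fin m)) (g : (Fin m → Bool) → Bool) (x : Fin m → Bool),
    (buildDT l g).eval x = g (fun j => if j ∈ l then x j else false) := by
  intro l
  induction l with
  | nil => intro g x; simp [buildDT, DT.eval]
  | cons i l ih =>
    intro g x
    simp only [buildDT, DT.eval]
    have key : ∀ b : Bool, x i = b →
        g (Function.update (fun j => if j ∈ l then x j else false) i b)
          = g (fun j => if j ∈ i :: l then x j else false) := by
      intro b hb
      congr 1
      funext j
      by_cases hj : j = i
      · subst hj; simp [Function.update_self, hb]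
      · simp [Function.update_of_ne hj, hj]
    by_cases hx : x i
    · simp only [hx, if_true, ih]
      exact key true hx
    · simp only [hx, Bool.false_eq_true, if_false, ih]
      exact key false (by simpa using hx)

lemma buildDT_depth {m : ℕ} : ∀ (l : List (Fin m)) (g : (Fin m → Bool) → Bool),
    (buildDT l g).depth = l.length := by
  intro l
  induction l with
  | nil => intro g; simp [buildDT, DT.depth]
  | cons i l ih => intro g; simp [buildDT, DT.depth, ih]

lemma debate_exists (n : ℕ) (f : (Fin n → Bool) → Bool) : ∃ ℓ k, IsDebate n k ℓ f := by
  refine ⟨n + 2 * 0, 0, ?_⟩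
  set g : (Fin (n + 2 * 0) → Bool) → Bool := fun y => f (fun i => y ⟨i.1, by omega⟩) with hg
  refine ⟨buildDT (List.finRange (n + 2 * 0)) g, by rw [buildDT_depth]; simp, ?_⟩
  intro x
  have heval : (buildDT (List.finRange (n + 2 * 0)) g).eval (assemble n 0 x []) = f x := by
    rw [buildDT_eval]
    simp only [List.mem_finRange, if_true, hg]
    congr 1
    funext i
    simp only [assemble]
    rw [dif_pos i.2]
  constructor
  · intro hfx
    exact heval.trans hfx
  · intro hfx
    exact heval.trans hfx

end Aux

/-- If `f` depends on all its variables then `DQC(f) ≥ log₂ n`. -/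
theorem stmt_2 (n : ℕ) (f : (Fin n → Bool) → Bool)
    (hdep : ∀ i : Fin n, DependsOnVar f i) :
    Real.logb 2 n ≤ (DQC n f : ℝ) := by
  obtain ⟨ℓ0, k0, hdb0⟩ := debate_exists n f
  have hmem : DQC n f ∈ {ℓ | ∃ k, IsDebate n k ℓ f} := Nat.sInf_mem ⟨ℓ0, k0, hdb0⟩
  obtain ⟨k, T, hdepth, hV⟩ := hmem
  -- every input variable appears in the tree
  have hvars : ∀ i : Fin n, (⟨i.1, by omega⟩ : Fin (n + 2 * k)) ∈ T.vars := by
    intro i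
    by_contra hni
    obtain ⟨x, hx⟩ := hdep i
    set x' := Function.update x i (!x i) with hx'def
    have heq : (fun t => T.eval (assemble n k x t)) = (fun t => T.eval (assemble n k x' t)) := by
      funext t
      apply T.eval_congr
      intro j hj
      simp only [assemble]
      by_cases hjn : (j : ℕ) < n
      · simp only [dif_pos hjn]
        have hne : (⟨(j : ℕ), hjn⟩ : Fin n) ≠ i := by
          intro h
          apply hni
          have hval : (j : ℕ) = (i : ℕ) := congrArg Fin.val h
          have hje : j = (⟨i.1, by omega⟩ : Fin (n + 2 * k)) := Fin.ext hval
          rwa [← hje]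
        rw [hx'def, Function.update_of_ne hne]
      · simp only [dif_neg hjn]
    cases hfx : f x with
    | true =>
      have hfx' : f x' = false := by
        cases h' : f x' with
        | true => exact absurd (hfx.trans h'.symm) hx
        | false => rfl
      exact not_AWins_and_BWins k _ ((hV x).1 hfx) (heq ▸ (hV x').2 hfx')
    | false =>
      have hfx' : f x' = true := by
        cases h' : f x' with
        | false => exact absurd (hfx.trans h'.symm) hx
        | true => rfl
      exact not_AWins_and_BWins k _ (heq ▸ (hV x').1 hfx') ((hV x).2 hfx)
  -- counting
  have hinj : Function.Injective (fun i : Fin n => (⟨i.1, by omega⟩ : Fin (n + 2 * k))) := by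
    intro a b hab
    have h1 : a.1 = b.1 := by simpa using congrArg Fin.val hab
    exact Fin.ext h1
  have hsub : Finset.univ.image (fun i : Fin n => (⟨i.1, by omega⟩ : Fin (n + 2 * k))) ⊆ T.vars := by
    intro j hj
    obtain ⟨i, _, rfl⟩ := Finset.mem_image.mp hj
    exact hvars i
  have hcard : n ≤ T.vars.card := by
    have h1 := Finset.card_le_card hsub
    rwa [Finset.card_image_of_injective _ hinj, Finset.card_univ, Fintype.card_fin] at h1
  have hpow : 2 ^ T.depth ≤ 2 ^ (DQC n f) := Nat.pow_le_pow_right (by norm_num) hdepth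
  have hlt : n < 2 ^ (DQC n f) := by
    have := T.card_vars_lt
    omega
  rcases Nat.eq_zero_or_pos n with h0 | hpos
  · subst h0
    simp only [Nat.cast_zero, Real.logb_zero]
    positivity
  · rw [Real.logb_le_iff_le_rpow (by norm_num) (by exact_mod_cast hpos)]
    rw [Real.rpow_natCast]
    exact_mod_cast hlt.le
end

section
/- For every Boolean function f computable by a leveled fan-in-2 AND/OR circuit of depth d, DQC(f) ≤ d + 1. -/
/-- `f` depends on variable `i` if flipping bit `i` can change the value of `f`. -/
def BoolDependsOn {m : ℕ} (f : (Fin m → Bool) → Bool) (i : Fin m) : Prop :=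
  ∃ x : Fin m → Bool, f x ≠ f (Function.update x i (!x i))

/-- A fan-in-2 AND/OR formula with literals (variables or their negations) at the
leaves; a leveled fan-in-2 AND/OR circuit of depth `d` unfolds into such a
formula of depth `d`. -/
inductive Formula (n : ℕ) : Type where
  | lit : Fin n → Bool → Formula n
  | and : Formula n → Formula n → Formula n
  | or : Formula n → Formula n → Formula n

/-- Evaluation of a formula; `lit i true` is the literal `x_i`, `lit i false` is `¬x_i`. -/
def Formula.eval {n : ℕ} : Formula n → (Fin n → Bool) → Bool
  | .lit i b, x => if b then x i else !x i
  | .and F G, x => F.eval x && G.eval x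
  | .or F G, x => F.eval x || G.eval x

/-- Depth of a formula (number of gate levels above the literals). -/
def Formula.depth {n : ℕ} : Formula n → ℕ
  | .lit _ _ => 0
  | .and F G => max F.depth G.depth + 1
  | .or F G => max F.depth G.depth + 1

/-- Verifier tree built from a formula: at an AND gate at round `j` read the
`a`-bit (index `n+2j`), at an OR gate read the `b`-bit (index `n+2j+1`), and at a
literal query the input variable. -/
def buildT (n k : ℕ) : Formula n → ℕ → DT (n + 2 * k)
  | .lit i s, _ =>
      .node ⟨i, lt_of_lt_of_le i.isLt (Nat.le_add_right _ _)⟩ (.leaf (!s)) (.leaf s)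
  | .and F G, j =>
      if h : n + 2 * j < n + 2 * k then
        .node ⟨n + 2 * j, h⟩ (buildT n k F (j + 1)) (buildT n k G (j + 1))
      else .leaf false
  | .or F G, j =>
      if h : n + 2 * j + 1 < n + 2 * k then
        .node ⟨n + 2 * j + 1, h⟩ (buildT n k F (j + 1)) (buildT n k G (j + 1))
      else .leaf false

lemma buildT_depth (n k : ℕ) (F : Formula n) (j : ℕ) :
    (buildT n k F j).depth ≤ F.depth + 1 := by
  induction F generalizing j with
  | lit i s => simp [buildT, DT.depth, Formula.depth]
  | and F G ihF ihG =>
      simp only [buildT, Formula.depth]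
      split
      · simp only [DT.depth]
        have := ihF (j + 1); have := ihG (j + 1); omega
      · simp [DT.depth]
  | or F G ihF ihG =>
      simp only [buildT, Formula.depth]
      split
      · simp only [DT.depth]
        have := ihF (j + 1); have := ihG (j + 1); omega
      · simp [DT.depth]

lemma AWins_const (m : ℕ) (V : List Bool → Bool) (h : ∀ t, V t = true) :
    AWins m V := by
  induction m generalizing V with
  | zero => exact h []
  | succ m ih => exact fun a => ⟨true, ih _ (fun t => h _)⟩

lemma BWins_const (m : ℕ) (V : List Bool → Bool) (h : ∀ t, V t = false) :
    BWins m V := by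
  induction m generalizing V with
  | zero => exact h []
  | succ m ih => exact ⟨true, fun b => ih _ (fun t => h _)⟩

lemma AWins_congr (m : ℕ) {V W : List Bool → Bool} (h : ∀ t, V t = W t) :
    AWins m V → AWins m W := by
  induction m generalizing V W with
  | zero => intro hv; show W [] = true; rw [← h]; exact hv
  | succ m ih =>
      intro hv a
      obtain ⟨b, hb⟩ := hv a
      exact ⟨b, ih (fun t => h _) hb⟩

lemma BWins_congr (m : ℕ) {V W : List Bool → Bool} (h : ∀ t, V t = W t) :
    BWins m V → BWins m W := by
  induction m generalizing V W with
  | zero => intro hv; show W [] = false; rw [← h]; exact hv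
  | succ m ih =>
      intro hv
      obtain ⟨a, ha⟩ := hv
      exact ⟨a, fun b => ih (fun t => h _) (ha b)⟩

lemma assemble_lt (n k : ℕ) (x : Fin n → Bool) (t : List Bool) (i : Fin n)
    (h : (i : ℕ) < n + 2 * k) :
    assemble n k x t ⟨i, h⟩ = x i := by
  simp [assemble]

lemma assemble_ge (n k : ℕ) (x : Fin n → Bool) (t : List Bool) (m : ℕ)
    (h : n + m < n + 2 * k) :
    assemble n k x t ⟨n + m, h⟩ = t.getD m false := by
  simp [assemble]

lemma getD_shift (s l : List Bool) (m : ℕ) :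
    (s ++ l).getD (s.length + m) false = l.getD m false := by
  rw [List.getD_append_right _ _ _ _ (Nat.le_add_right _ _), Nat.add_sub_cancel_left]

lemma main_lemma (n k : ℕ) (x : Fin n → Bool) (F : Formula n) (j : ℕ)
    (hj : j + F.depth < k) (s : List Bool) (hs : s.length = 2 * j) :
    (F.eval x = true →
      AWins (k - j) (fun t => (buildT n k F j).eval (assemble n k x (s ++ t)))) ∧
    (F.eval x = false →
      BWins (k - j) (fun t => (buildT n k F j).eval (assemble n k x (s ++ t)))) := by
  induction F generalizing j s with
  | lit i b =>
      have heval : ∀ t, (buildT n k (.lit i b) j).eval (assemble n k x (s ++ t))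
          = Formula.eval (.lit i b) x := by
        intro t
        simp only [buildT, DT.eval, assemble_lt, Formula.eval]
        cases b <;> cases hxi : x i <;> simp [hxi]
      constructor
      · intro hT
        exact AWins_const _ _ (fun t => by rw [heval t, hT])
      · intro hF
        exact BWins_const _ _ (fun t => by rw [heval t, hF])
  | and F G ihF ihG =>
      have hlt : n + 2 * j < n + 2 * k := by omega
      have hkj : k - j = (k - (j + 1)) + 1 := by omega
      simp only [Formula.depth] at hj
      have hjF : j + 1 + F.depth < k := by omega
      have hjG : j + 1 + G.depth < k := by omega
      have heval : ∀ (a b : Bool) (t : List Bool),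
          (buildT n k (.and F G) j).eval (assemble n k x ((s ++ [a, b]) ++ t))
          = (if a then buildT n k G (j + 1) else buildT n k F (j + 1)).eval
              (assemble n k x ((s ++ [a, b]) ++ t)) := by
        intro a b t
        simp only [buildT, dif_pos hlt, DT.eval]
        have hget : assemble n k x ((s ++ [a, b]) ++ t) ⟨n + 2 * j, hlt⟩ = a := by
          rw [assemble_ge, List.append_assoc, ← hs,
            show s.length = s.length + 0 from rfl, getD_shift]
          rfl
        rw [hget]
        cases a <;> simp
      have hlen : ∀ a b : Bool, (s ++ [a, b]).length = 2 * (j + 1) := by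
        intro a b; simp [hs]; omega
      constructor
      · intro hT
        rw [Formula.eval, Bool.and_eq_true] at hT
        rw [hkj]
        intro a
        refine ⟨true, ?_⟩
        cases a with
        | false =>
            have := (ihF (j+1) hjF (s ++ [false, true]) (hlen _ _)).1 hT.1
            refine AWins_congr _ (fun t => ?_) this
            show _ = (buildT n k (.and F G) j).eval
              (assemble n k x (s ++ (false :: true :: t)))
            rw [show s ++ (false :: true :: t) = (s ++ [false, true]) ++ t by simp,
              heval]
            simp
        | true =>
            have := (ihG (j+1) hjG (s ++ [true, true]) (hlen _ _)).1 hT.2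
            refine AWins_congr _ (fun t => ?_) this
            show _ = (buildT n k (.and F G) j).eval
              (assemble n k x (s ++ (true :: true :: t)))
            rw [show s ++ (true :: true :: t) = (s ++ [true, true]) ++ t by simp,
              heval]
            simp
      · intro hT
        rw [Formula.eval, Bool.and_eq_false_iff] at hT
        rw [hkj]
        cases hT with
        | inl hF0 =>
            refine ⟨false, fun b => ?_⟩
            have := (ihF (j+1) hjF (s ++ [false, b]) (hlen _ _)).2 hF0
            refine BWins_congr _ (fun t => ?_) this
            show _ = (buildT n k (.and F G) j).eval
              (assemble n k x (s ++ (false :: b :: t)))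
            rw [show s ++ (false :: b :: t) = (s ++ [false, b]) ++ t by simp, heval]
            simp
        | inr hG0 =>
            refine ⟨true, fun b => ?_⟩
            have := (ihG (j+1) hjG (s ++ [true, b]) (hlen _ _)).2 hG0
            refine BWins_congr _ (fun t => ?_) this
            show _ = (buildT n k (.and F G) j).eval
              (assemble n k x (s ++ (true :: b :: t)))
            rw [show s ++ (true :: b :: t) = (s ++ [true, b]) ++ t by simp, heval]
            simp
  | or F G ihF ihG =>
      have hlt : n + 2 * j + 1 < n + 2 * k := by omega
      have hkj : k - j = (k - (j + 1)) + 1 := by omega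
      simp only [Formula.depth] at hj
      have hjF : j + 1 + F.depth < k := by omega
      have hjG : j + 1 + G.depth < k := by omega
      have heval : ∀ (a b : Bool) (t : List Bool),
          (buildT n k (.or F G) j).eval (assemble n k x ((s ++ [a, b]) ++ t))
          = (if b then buildT n k G (j + 1) else buildT n k F (j + 1)).eval
              (assemble n k x ((s ++ [a, b]) ++ t)) := by
        intro a b t
        simp only [buildT, dif_pos hlt, DT.eval]
        have hget : assemble n k x ((s ++ [a, b]) ++ t)
            ⟨n + (2 * j + 1), by omega⟩ = b := by
          rw [assemble_ge, List.append_assoc,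
            show 2 * j + 1 = s.length + 1 by omega, getD_shift]
          rfl
        have hfin : (⟨n + 2 * j + 1, hlt⟩ : Fin (n + 2 * k))
            = ⟨n + (2 * j + 1), by omega⟩ := by
          apply Fin.ext; simp; omega
        rw [hfin, hget]
        cases b <;> simp
      have hlen : ∀ a b : Bool, (s ++ [a, b]).length = 2 * (j + 1) := by
        intro a b; simp [hs]; omega
      constructor
      · intro hT
        rw [Formula.eval, Bool.or_eq_true] at hT
        rw [hkj]
        intro a
        cases hT with
        | inl hF1 =>
            refine ⟨false, ?_⟩
            have := (ihF (j+1) hjF (s ++ [a, false]) (hlen _ _)).1 hF1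
            refine AWins_congr _ (fun t => ?_) this
            show _ = (buildT n k (.or F G) j).eval
              (assemble n k x (s ++ (a :: false :: t)))
            rw [show s ++ (a :: false :: t) = (s ++ [a, false]) ++ t by simp, heval]
            simp
        | inr hG1 =>
            refine ⟨true, ?_⟩
            have := (ihG (j+1) hjG (s ++ [a, true]) (hlen _ _)).1 hG1
            refine AWins_congr _ (fun t => ?_) this
            show _ = (buildT n k (.or F G) j).eval
              (assemble n k x (s ++ (a :: true :: t)))
            rw [show s ++ (a :: true :: t) = (s ++ [a, true]) ++ t by simp, heval]
            simp
      · intro hT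
        rw [Formula.eval, Bool.or_eq_false_iff] at hT
        rw [hkj]
        refine ⟨true, fun b => ?_⟩
        cases b with
        | false =>
            have := (ihF (j+1) hjF (s ++ [true, false]) (hlen _ _)).2 hT.1
            refine BWins_congr _ (fun t => ?_) this
            show _ = (buildT n k (.or F G) j).eval
              (assemble n k x (s ++ (true :: false :: t)))
            rw [show s ++ (true :: false :: t) = (s ++ [true, false]) ++ t by simp,
              heval]
            simp
        | true =>
            have := (ihG (j+1) hjG (s ++ [true, true]) (hlen _ _)).2 hT.2
            refine BWins_congr _ (fun t => ?_) this
            show _ = (buildT n k (.or F G) j).eval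
              (assemble n k x (s ++ (true :: true :: t)))
            rw [show s ++ (true :: true :: t) = (s ++ [true, true]) ++ t by simp,
              heval]
            simp

/-- If `f` is computable by a (leveled) fan-in-2 AND/OR circuit of depth `d`, then
`DQC(f) ≤ d + 1`. -/
theorem stmt_7 (n d : ℕ) (f : (Fin n → Bool) → Bool)
    (h : ∃ F : Formula n, F.depth ≤ d ∧ ∀ x, F.eval x = f x) :
    DQC n f ≤ d + 1 := by
  obtain ⟨F, hFd, hFf⟩ := h
  apply Nat.sInf_le
  refine ⟨d + 1, buildT n (d + 1) F 0, ?_, ?_⟩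
  · calc (buildT n (d+1) F 0).depth ≤ F.depth + 1 := buildT_depth _ _ _ _
      _ ≤ d + 1 := by omega
  · intro x
    have hm := main_lemma n (d + 1) x F 0 (by omega) [] rfl
    constructor
    · intro hx
      have := hm.1 (by rw [hFf x, hx])
      simpa using this
    · intro hx
      have := hm.2 (by rw [hFf x, hx])
      simpa using this
end

section
/- A Boolean function f : {0,1}^n → {0,1} that has a debate with verifier decision-tree depth at most a·log₂(n) admits a debate of transcript length at most 2·n^a rounds with the same verifier depth. -/
/-- `f` depends on variable `i` if flipping bit `i` can change the value of `f`. -/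
def DT.DependsOn {m : ℕ} (f : (Fin m → Bool) → Bool) (i : Fin m) : Prop :=
  ∃ x : Fin m → Bool, f x ≠ f (Function.update x i (!x i))

namespace StmtAux

/-- Relabel the variables of a decision tree. -/
def relabel {m m' : ℕ} (σ : Fin m → Fin m') : DT m → DT m'
  | .leaf b => .leaf b
  | .node i t0 t1 => .node (σ i) (relabel σ t0) (relabel σ t1)

lemma eval_relabel {m m' : ℕ} (σ : Fin m → Fin m') (T : DT m) (x : Fin m' → Bool) :
    (relabel σ T).eval x = T.eval (fun i => x (σ i)) := by
  induction T with
  | leaf b => rfl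
  | node i t0 t1 ih0 ih1 => simp [relabel, DT.eval, ih0, ih1]

lemma depth_relabel {m m' : ℕ} (σ : Fin m → Fin m') (T : DT m) :
    (relabel σ T).depth = T.depth := by
  induction T with
  | leaf b => rfl
  | node i t0 t1 ih0 ih1 => simp [relabel, DT.depth, ih0, ih1]

lemma eval_congr {m : ℕ} (T : DT m) (x y : Fin m → Bool)
    (h : ∀ i ∈ T.vars, x i = y i) : T.eval x = T.eval y := by
  induction T with
  | leaf b => rfl
  | node i t0 t1 ih0 ih1 =>
    simp only [DT.vars, Finset.mem_insert, Finset.mem_union] at h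
    have hi : x i = y i := h i (Or.inl rfl)
    simp only [DT.eval, hi]
    split
    · exact ih1 fun p hp => h p (Or.inr (Or.inr hp))
    · exact ih0 fun p hp => h p (Or.inr (Or.inl hp))

lemma vars_card_le {m : ℕ} (T : DT m) : T.vars.card ≤ T.numNodes := by
  induction T with
  | leaf b => simp [DT.vars, DT.numNodes]
  | node i t0 t1 ih0 ih1 =>
    simp only [DT.vars, DT.numNodes]
    calc (insert i (t0.vars ∪ t1.vars)).card ≤ (t0.vars ∪ t1.vars).card + 1 :=
          Finset.card_insert_le _ _
      _ ≤ (t0.vars.card + t1.vars.card) + 1 :=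
          Nat.add_le_add_right (Finset.card_union_le _ _) 1
      _ ≤ t0.numNodes + t1.numNodes + 1 := by omega

lemma numNodes_lt {m : ℕ} (T : DT m) : T.numNodes < 2 ^ T.depth := by
  induction T with
  | leaf b => simp [DT.numNodes, DT.depth]
  | node i t0 t1 ih0 ih1 =>
    simp only [DT.numNodes, DT.depth]
    have h0 : 2 ^ t0.depth ≤ 2 ^ (max t0.depth t1.depth) :=
      Nat.pow_le_pow_right (by norm_num) (le_max_left _ _)
    have h1 : 2 ^ t1.depth ≤ 2 ^ (max t0.depth t1.depth) :=
      Nat.pow_le_pow_right (by norm_num) (le_max_right _ _)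
    have : 2 ^ (max t0.depth t1.depth + 1) = 2 ^ (max t0.depth t1.depth) + 2 ^ (max t0.depth t1.depth) := by
      ring
    omega

lemma AWins_congr : ∀ (k : ℕ) (V W : List Bool → Bool),
    (∀ t : List Bool, t.length = 2 * k → V t = W t) → AWins k V → AWins k W
  | 0, V, W, h, hA => by
    have := h [] rfl
    unfold AWins at hA ⊢
    rw [← this]; exact hA
  | k + 1, V, W, h, hA => by
    intro a
    obtain ⟨b, hb⟩ := hA a
    exact ⟨b, AWins_congr k _ _
      (fun t ht => h (a :: b :: t) (by simp only [List.length_cons, ht]; omega)) hb⟩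

lemma BWins_congr : ∀ (k : ℕ) (V W : List Bool → Bool),
    (∀ t : List Bool, t.length = 2 * k → V t = W t) → BWins k V → BWins k W
  | 0, V, W, h, hB => by
    have := h [] rfl
    unfold BWins at hB ⊢
    rw [← this]; exact hB
  | k + 1, V, W, h, hB => by
    obtain ⟨a, ha⟩ := hB
    refine ⟨a, fun b => BWins_congr k _ _
      (fun t ht => h (a :: b :: t) (by simp only [List.length_cons, ht]; omega)) (ha b)⟩

lemma remA : ∀ (j k : ℕ) (V : List Bool → Bool), j ≤ k →
    (∀ (s u : List Bool) (a b : Bool), s.length = 2 * j →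
      V (s ++ a :: b :: u) = V (s ++ false :: false :: u)) →
    AWins (k + 1) V →
    AWins k (fun t => V (t.take (2 * j) ++ false :: false :: t.drop (2 * j))) := by
  intro j
  induction j with
  | zero =>
    intro k V _ hIgn hA
    obtain ⟨b, hb⟩ := hA false
    refine AWins_congr k _ _ (fun t ht => ?_) hb
    simpa using hIgn [] t false b rfl
  | succ j ih =>
    intro k V hjk hIgn hA
    match k, hjk with
    | k + 1, hjk =>
      intro a
      obtain ⟨b, hb⟩ := hA a
      have h2 : j ≤ k := by omega
      have key := ih k (fun t => V (a :: b :: t)) h2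
        (fun s u a' b' hs => hIgn (a :: b :: s) u a' b'
          (by simp only [List.length_cons, hs]; omega)) hb
      refine ⟨b, AWins_congr k _ _ (fun t ht => ?_) key⟩
      have h1 : 2 * (j + 1) = 2 * j + 2 := by omega
      simp only [h1, List.take_succ_cons, List.drop_succ_cons, List.cons_append]

lemma remB : ∀ (j k : ℕ) (V : List Bool → Bool), j ≤ k →
    (∀ (s u : List Bool) (a b : Bool), s.length = 2 * j →
      V (s ++ a :: b :: u) = V (s ++ false :: false :: u)) →
    BWins (k + 1) V →
    BWins k (fun t => V (t.take (2 * j) ++ false :: false :: t.drop (2 * j))) := by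
  intro j
  induction j with
  | zero =>
    intro k V _ hIgn hB
    obtain ⟨a, ha⟩ := hB
    refine BWins_congr k _ _ (fun t ht => ?_) (ha false)
    simpa using hIgn [] t a false rfl
  | succ j ih =>
    intro k V hjk hIgn hB
    match k, hjk with
    | k + 1, hjk =>
      obtain ⟨a, ha⟩ := hB
      refine ⟨a, fun b => ?_⟩
      have h2 : j ≤ k := by omega
      have key := ih k (fun t => V (a :: b :: t)) h2
        (fun s u a' b' hs => hIgn (a :: b :: s) u a' b'
          (by simp only [List.length_cons, hs]; omega)) (ha b)
      refine BWins_congr k _ _ (fun t ht => ?_) key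
      have h1 : 2 * (j + 1) = 2 * j + 2 := by omega
      simp only [h1, List.take_succ_cons, List.drop_succ_cons, List.cons_append]

end StmtAux

namespace StmtAux

lemma getD_append_lt (s u : List Bool) (i : ℕ) (h : i < s.length) :
    (s ++ u).getD i false = s.getD i false := by
  simp [List.getD_eq_getElem?_getD, List.getElem?_append, h]

lemma getD_append_ge (s u : List Bool) (i : ℕ) (h : s.length ≤ i) :
    (s ++ u).getD i false = u.getD (i - s.length) false := by
  simp [List.getD_eq_getElem?_getD, List.getElem?_append, Nat.not_lt.mpr h]

lemma getD_insert2_lt (s : List Bool) (m i : ℕ) (hm : m ≤ s.length) (hi : i < m) :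
    (s.take m ++ false :: false :: s.drop m).getD i false = s.getD i false := by
  rw [getD_append_lt _ _ _ (by rw [List.length_take]; omega)]
  simp [List.getD_eq_getElem?_getD, List.getElem?_take, hi]

lemma getD_insert2_ge (s : List Bool) (m i : ℕ) (hm : m ≤ s.length) (hi : m + 2 ≤ i) :
    (s.take m ++ false :: false :: s.drop m).getD i false = s.getD (i - 2) false := by
  have hlen : (s.take m).length = m := by simp [List.length_take]; omega
  rw [getD_append_ge _ _ _ (by omega)]
  rw [hlen]
  have h1 : i - m = (i - m - 2) + 2 := by omega
  rw [h1]
  show (s.drop m).getD (i - m - 2) false = s.getD (i - 2) false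
  simp only [List.getD_eq_getElem?_getD, List.getElem?_drop]
  congr 2
  omega

/-- The single-round-elimination step. -/
lemma step (n k ℓ : ℕ) (hn : 1 ≤ n) (f : (Fin n → Bool) → Bool) (j : ℕ) (hj : j ≤ k)
    (T : DT (n + 2 * (k + 1))) (hd : T.depth ≤ ℓ)
    (hun : ∀ p : Fin (n + 2 * (k + 1)),
      ((p : ℕ) = n + 2 * j ∨ (p : ℕ) = n + 2 * j + 1) → p ∉ T.vars)
    (hw : ∀ x : Fin n → Bool,
      (f x = true → AWins (k + 1) (fun t => T.eval (assemble n (k + 1) x t))) ∧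
      (f x = false → BWins (k + 1) (fun t => T.eval (assemble n (k + 1) x t)))) :
    IsDebate n k ℓ f := by
  set σ : Fin (n + 2 * (k + 1)) → Fin (n + 2 * k) := fun p =>
    if h1 : (p : ℕ) < n + 2 * j then ⟨p, by omega⟩
    else if h2 : n + 2 * j + 2 ≤ (p : ℕ) then ⟨(p : ℕ) - 2, by omega⟩
    else ⟨0, by omega⟩ with hσ
  refine ⟨relabel σ T, by rwa [depth_relabel], fun x => ?_⟩
  -- key pointwise identity
  have key : ∀ t : List Bool, t.length = 2 * k →
      (relabel σ T).eval (assemble n k x t) =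
      T.eval (assemble n (k + 1) x (t.take (2 * j) ++ false :: false :: t.drop (2 * j))) := by
    intro t ht
    rw [eval_relabel]
    apply eval_congr
    intro p hp
    have hp0 : (p : ℕ) ≠ n + 2 * j := fun hc => hun p (Or.inl hc) hp
    have hp1 : (p : ℕ) ≠ n + 2 * j + 1 := fun hc => hun p (Or.inr hc) hp
    by_cases h1 : (p : ℕ) < n + 2 * j
    · have e1 : ((σ p : Fin (n + 2 * k)) : ℕ) = (p : ℕ) := by simp [hσ, h1]
      simp only [assemble, e1]
      by_cases h2 : (p : ℕ) < n
      · simp [h2]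
      · rw [dif_neg h2, dif_neg h2]
        exact (getD_insert2_lt t (2 * j) ((p : ℕ) - n) (by omega) (by omega)).symm
    · have e1 : ((σ p : Fin (n + 2 * k)) : ℕ) = (p : ℕ) - 2 := by
        simp [hσ, h1, show n + 2 * j + 2 ≤ (p : ℕ) by omega]
      simp only [assemble, e1]
      have h2 : ¬ ((p : ℕ) - 2 < n) := by omega
      have h3 : ¬ ((p : ℕ) < n) := by omega
      rw [dif_neg h2, dif_neg h3]
      rw [getD_insert2_ge t (2 * j) ((p : ℕ) - n) (by omega) (by omega)]
      congr 1
      omega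
  -- independence of round j
  have ign : ∀ (s u : List Bool) (a b : Bool), s.length = 2 * j →
      T.eval (assemble n (k + 1) x (s ++ a :: b :: u)) =
      T.eval (assemble n (k + 1) x (s ++ false :: false :: u)) := by
    intro s u a b hs
    apply eval_congr
    intro p hp
    have hp0 : (p : ℕ) ≠ n + 2 * j := fun hc => hun p (Or.inl hc) hp
    have hp1 : (p : ℕ) ≠ n + 2 * j + 1 := fun hc => hun p (Or.inr hc) hp
    simp only [assemble]
    by_cases h2 : (p : ℕ) < n
    · simp [h2]
    · rw [dif_neg h2, dif_neg h2]
      by_cases h3 : (p : ℕ) - n < 2 * j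
      · rw [getD_append_lt _ _ _ (by omega), getD_append_lt _ _ _ (by omega)]
      · rw [getD_append_ge _ _ _ (by omega), getD_append_ge _ _ _ (by omega), hs]
        have h4 : (p : ℕ) - n - 2 * j = ((p : ℕ) - n - 2 * j - 2) + 2 := by omega
        rw [h4]
        rfl
  constructor
  · intro hfx
    have hA := (hw x).1 hfx
    have := remA j k _ hj ign hA
    exact AWins_congr k _ _ (fun t ht => (key t ht).symm) this
  · intro hfx
    have hB := (hw x).2 hfx
    have := remB j k _ hj ign hB
    exact BWins_congr k _ _ (fun t ht => (key t ht).symm) this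

end StmtAux

namespace StmtAux

lemma reduce (n ℓ a : ℕ) (hn : 1 ≤ n) (f : (Fin n → Bool) → Bool)
    (hpow : 2 ^ ℓ ≤ n ^ a) :
    ∀ k : ℕ, IsDebate n k ℓ f → ∃ k' : ℕ, k' ≤ n ^ a ∧ IsDebate n k' ℓ f := by
  intro k
  induction k with
  | zero => exact fun h => ⟨0, Nat.zero_le _, h⟩
  | succ k ih =>
    intro h
    by_cases hk : k + 1 ≤ n ^ a
    · exact ⟨k + 1, hk, h⟩
    · obtain ⟨T, hd, hw⟩ := h
      apply ih
      -- find an untouched round j ≤ k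
      obtain ⟨j, hjk, hj⟩ : ∃ j ≤ k, ∀ p : Fin (n + 2 * (k + 1)),
          ((p : ℕ) = n + 2 * j ∨ (p : ℕ) = n + 2 * j + 1) → p ∉ T.vars := by
        set B : Finset ℕ := T.vars.image (fun p : Fin (n + 2 * (k + 1)) => ((p : ℕ) - n) / 2) with hB
        have hcard : B.card < (Finset.range (k + 1)).card := by
          have h1 : B.card ≤ T.vars.card := Finset.card_image_le
          have h2 : T.vars.card ≤ T.numNodes := vars_card_le T
          have h3 : T.numNodes < 2 ^ T.depth := numNodes_lt T
          have h4 : 2 ^ T.depth ≤ 2 ^ ℓ := Nat.pow_le_pow_right (by norm_num) hd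
          rw [Finset.card_range]
          omega
        obtain ⟨j, hjr, hjB⟩ : ∃ j ∈ Finset.range (k + 1), j ∉ B := by
          by_contra hc
          push_neg at hc
          exact absurd (Finset.card_le_card hc) (Nat.not_le.mpr hcard)
        refine ⟨j, by simpa using Nat.lt_succ_iff.mp (Finset.mem_range.mp hjr), ?_⟩
        intro p hp hpv
        apply hjB
        rw [hB, Finset.mem_image]
        refine ⟨p, hpv, ?_⟩
        rcases hp with hp | hp <;> rw [hp] <;> omega
      exact step n k ℓ hn f j hjk T hd hj hw

end StmtAux

/-- A debate with verifier depth at most `a · log₂ n` can be converted into a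
debate of transcript length at most `2 · n^a` bits with the same verifier depth. -/
theorem stmt_11 (n a k ℓ : ℕ) (f : (Fin n → Bool) → Bool)
    (hℓ : ℓ ≤ a * Nat.log 2 n) (h : IsDebate n k ℓ f) :
    ∃ k' : ℕ, 2 * k' ≤ 2 * n ^ a ∧ IsDebate n k' ℓ f := by
  rcases Nat.eq_zero_or_pos n with hn | hn
  · subst hn
    refine ⟨0, Nat.zero_le _, DT.leaf (f (fun i => i.elim0)), by simp [DT.depth], fun x => ?_⟩
    have hx : x = fun i => i.elim0 := funext fun i => i.elim0
    subst hx
    constructor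
    · intro hfx
      show DT.eval _ _ = true
      simpa [DT.eval] using hfx
    · intro hfx
      show DT.eval _ _ = false
      simpa [DT.eval] using hfx
  · have hpow : 2 ^ ℓ ≤ n ^ a := by
      calc 2 ^ ℓ ≤ 2 ^ (a * Nat.log 2 n) := Nat.pow_le_pow_right (by norm_num) hℓ
        _ = (2 ^ Nat.log 2 n) ^ a := by rw [← Nat.pow_mul, Nat.mul_comm]
        _ ≤ n ^ a := Nat.pow_le_pow_left (Nat.pow_log_le_self 2 (by omega)) a
    obtain ⟨k', hk', hdeb⟩ := StmtAux.reduce n ℓ a hn f hpow k h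
    exact ⟨k', by omega, hdeb⟩
end

section
/- Randomised verifier lower bound: if f : {0,1}^n → {0,1} depends on all its variables, then any randomised decision tree that, for every input x and every valid debate transcript for x, outputs V(transcript, x) correctly with probability at least 2/3, must make at least log₂(n) - 3 queries in the worst case. -/
/-- The transcript produced after `k` rounds when Prover 0 plays strategy `A`
and Prover 1 plays strategy `B` (each maps the history so far to its next bit). -/
def play (A B : List Bool → Bool) : ℕ → List Bool
  | 0 => []
  | k + 1 =>
      let h := play A B k
      let a := A h
      h ++ [a, B (h ++ [a])]

/-- `(A, B, T)` is a valid debate system for `f`: the honest prover forces the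
correct verdict against every strategy of the dishonest prover. -/
def ValidSystem (n k : ℕ) (f : (Fin n → Bool) → Bool)
    (A B : (Fin n → Bool) → List Bool → Bool) (T : DT (n + 2 * k)) : Prop :=
  ∀ x : Fin n → Bool,
    (f x = false → ∀ B' : List Bool → Bool,
      T.eval (assemble n k x (play (A x) B' k)) = false) ∧
    (f x = true → ∀ A' : List Bool → Bool,
      T.eval (assemble n k x (play A' (B x) k)) = true)

/-- A transcript is valid for `f` on `x` if it arises from the interaction of the
honest prover with some (possibly dishonest) opposing prover on input `x`. -/
def ValidTranscript (n k : ℕ) (f : (Fin n → Bool) → Bool)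
    (A B : (Fin n → Bool) → List Bool → Bool) (x : Fin n → Bool)
    (tr : List Bool) : Prop :=
  (f x = false ∧ ∃ B' : List Bool → Bool, tr = play (A x) B' k) ∨
  (f x = true ∧ ∃ A' : List Bool → Bool, tr = play A' (B x) k)

lemma DT.eval_eq_of_agree {m : ℕ} (t : DT m) (x y : Fin m → Bool)
    (h : ∀ i ∈ t.vars, x i = y i) : t.eval x = t.eval y := by
  induction t with
  | leaf b => rfl
  | node i t0 t1 ih0 ih1 =>
      have hi : x i = y i := h i (by simp [DT.vars])
      have h0 := ih0 (fun j hj => h j (by simp [DT.vars, hj]))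
      have h1 := ih1 (fun j hj => h j (by simp [DT.vars, hj]))
      simp [DT.eval, hi, h0, h1]

lemma DT.vars_card_le_numNodes {m : ℕ} (t : DT m) : t.vars.card ≤ t.numNodes := by
  induction t with
  | leaf b => simp [DT.vars, DT.numNodes]
  | node i t0 t1 ih0 ih1 =>
      calc (insert i (t0.vars ∪ t1.vars)).card
          ≤ (t0.vars ∪ t1.vars).card + 1 := Finset.card_insert_le _ _
        _ ≤ (t0.vars.card + t1.vars.card) + 1 := by
              exact Nat.add_le_add_right (Finset.card_union_le _ _) 1
        _ ≤ t0.numNodes + t1.numNodes + 1 := by omega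

lemma DT.numNodes_lt_two_pow_depth {m : ℕ} (t : DT m) :
    t.numNodes + 1 ≤ 2 ^ t.depth := by
  induction t with
  | leaf b => simp [DT.numNodes, DT.depth]
  | node i t0 t1 ih0 ih1 =>
      have h0 : 2 ^ t0.depth ≤ 2 ^ (max t0.depth t1.depth) :=
        Nat.pow_le_pow_right (by norm_num) (le_max_left _ _)
      have h1 : 2 ^ t1.depth ≤ 2 ^ (max t0.depth t1.depth) :=
        Nat.pow_le_pow_right (by norm_num) (le_max_right _ _)
      have : 2 ^ (max t0.depth t1.depth + 1) = 2 ^ (max t0.depth t1.depth) * 2 :=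
        pow_succ 2 _
      simp only [DT.numNodes, DT.depth]
      omega

/-- Yao-style counting lemma: if for each `i` we have a pair of inputs differing
only in coordinate `i`, on which the randomised tree answers `false`/`true`
respectively with probability `≥ 2/3`, then `n ≤ 3 · 2^q`. -/
lemma yao_count {m n q : ℕ} (hnm : n ≤ m) (R : Type) [Fintype R]
    (trees : R → DT m) (wt : R → ℝ) (hwt : ∀ r, 0 ≤ wt r)
    (hsum : ∑ r : R, wt r = 1) (hdepth : ∀ r, (trees r).depth ≤ q)
    (y0 y1 : Fin n → Fin m → Bool)
    (hagree : ∀ (i : Fin n) (j : Fin m), j ≠ Fin.castLE hnm i → y0 i j = y1 i j)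
    (h0 : ∀ i, 2/3 ≤ ∑ r ∈ Finset.univ.filter
        (fun r => (trees r).eval (y0 i) = false), wt r)
    (h1 : ∀ i, 2/3 ≤ ∑ r ∈ Finset.univ.filter
        (fun r => (trees r).eval (y1 i) = true), wt r) :
    (n : ℝ) ≤ 3 * 2 ^ q := by
  classical
  -- per-tree counting bound
  have ccount : ∀ r : R,
      (∑ i : Fin n, (((if (trees r).eval (y0 i) = false then 1 else 0) +
        (if (trees r).eval (y1 i) = true then 1 else 0)) : ℝ))
        ≤ (n : ℝ) + ((2 ^ q - 1 : ℕ) : ℝ) := by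
    intro r
    set S := Finset.univ.filter (fun i : Fin n =>
      (trees r).eval (y0 i) = false ∧ (trees r).eval (y1 i) = true) with hS
    have hScard : S.card ≤ 2 ^ q - 1 := by
      have hinj : Set.InjOn (fun i : Fin n => Fin.castLE hnm i) S := by
        intro a _ b _ hab
        exact Fin.castLE_injective hnm hab
      have hmaps : ∀ i ∈ S, Fin.castLE hnm i ∈ (trees r).vars := by
        intro i hi
        simp only [hS, Finset.mem_filter] at hi
        by_contra hnot
        have heq := DT.eval_eq_of_agree (trees r) (y0 i) (y1 i)
          (fun j hj => hagree i j (fun hji => hnot (hji ▸ hj)))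
        rw [hi.2.1, hi.2.2] at heq
        exact Bool.false_ne_true heq
      have h1 : S.card ≤ (trees r).vars.card :=
        Finset.card_le_card_of_injOn _ hmaps hinj
      have h2 : (trees r).vars.card ≤ (trees r).numNodes :=
        DT.vars_card_le_numNodes _
      have h3 : (trees r).numNodes + 1 ≤ 2 ^ (trees r).depth :=
        DT.numNodes_lt_two_pow_depth _
      have h4 : (2 : ℕ) ^ (trees r).depth ≤ 2 ^ q :=
        Nat.pow_le_pow_right (by norm_num) (hdepth r)
      omega
    have hterm : ∀ i : Fin n,
        (((if (trees r).eval (y0 i) = false then 1 else 0) +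
          (if (trees r).eval (y1 i) = true then 1 else 0)) : ℝ)
        ≤ 1 + (if i ∈ S then 1 else 0) := by
      intro i
      by_cases hA : (trees r).eval (y0 i) = false <;>
        by_cases hB : (trees r).eval (y1 i) = true <;>
        simp [hS, hA, hB]
    calc (∑ i : Fin n, (((if (trees r).eval (y0 i) = false then 1 else 0) +
          (if (trees r).eval (y1 i) = true then 1 else 0)) : ℝ))
        ≤ ∑ i : Fin n, ((1 : ℝ) + (if i ∈ S then 1 else 0)) :=
          Finset.sum_le_sum (fun i _ => hterm i)
      _ = (n : ℝ) + (S.card : ℝ) := by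
          rw [Finset.sum_add_distrib, Finset.sum_const, Finset.card_univ]
          simp [Finset.sum_ite_mem]
      _ ≤ (n : ℝ) + ((2 ^ q - 1 : ℕ) : ℝ) :=
          add_le_add (le_refl _) (by exact_mod_cast hScard)
  -- weighted average lower bound
  have hlow : (4/3 : ℝ) * n ≤ ∑ r : R, wt r *
      (∑ i : Fin n, (((if (trees r).eval (y0 i) = false then 1 else 0) +
        (if (trees r).eval (y1 i) = true then 1 else 0)) : ℝ)) := by
    have swap : (∑ r : R, wt r *
        (∑ i : Fin n, (((if (trees r).eval (y0 i) = false then 1 else 0) +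
          (if (trees r).eval (y1 i) = true then 1 else 0)) : ℝ)))
        = ∑ i : Fin n, (∑ r : R, (if (trees r).eval (y0 i) = false then wt r else 0)
          + ∑ r : R, (if (trees r).eval (y1 i) = true then wt r else 0)) := by
      simp only [Finset.mul_sum]
      rw [Finset.sum_comm]
      congr 1; funext i
      rw [← Finset.sum_add_distrib]
      congr 1; funext r
      by_cases hA : (trees r).eval (y0 i) = false <;>
        by_cases hB : (trees r).eval (y1 i) = true <;>
        simp [hA, hB] <;> ring
    rw [swap]
    have hbound : ∀ i : Fin n, (4/3 : ℝ) ≤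
        ∑ r : R, (if (trees r).eval (y0 i) = false then wt r else 0)
          + ∑ r : R, (if (trees r).eval (y1 i) = true then wt r else 0) := by
      intro i
      have e0 : (∑ r : R, (if (trees r).eval (y0 i) = false then wt r else 0))
          = ∑ r ∈ Finset.univ.filter (fun r => (trees r).eval (y0 i) = false), wt r :=
        (Finset.sum_filter _ _).symm
      have e1 : (∑ r : R, (if (trees r).eval (y1 i) = true then wt r else 0))
          = ∑ r ∈ Finset.univ.filter (fun r => (trees r).eval (y1 i) = true), wt r :=
        (Finset.sum_filter _ _).symm
      rw [e0, e1]
      linarith [h0 i, h1 i]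
    calc (4/3 : ℝ) * n = ∑ _i : Fin n, (4/3 : ℝ) := by
          simp [mul_comm]
      _ ≤ _ := Finset.sum_le_sum (fun i _ => hbound i)
  have hup : (∑ r : R, wt r *
      (∑ i : Fin n, (((if (trees r).eval (y0 i) = false then 1 else 0) +
        (if (trees r).eval (y1 i) = true then 1 else 0)) : ℝ)))
      ≤ (n : ℝ) + ((2 ^ q - 1 : ℕ) : ℝ) := by
    calc (∑ r : R, wt r * _) ≤ ∑ r : R, wt r * ((n : ℝ) + ((2 ^ q - 1 : ℕ) : ℝ)) := by
          apply Finset.sum_le_sum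
          intro r _
          exact mul_le_mul_of_nonneg_left (ccount r) (hwt r)
      _ = (n : ℝ) + ((2 ^ q - 1 : ℕ) : ℝ) := by
          rw [← Finset.sum_mul, hsum, one_mul]
  have hcast : ((2 ^ q - 1 : ℕ) : ℝ) = (2 : ℝ) ^ q - 1 := by
    have : (1 : ℕ) ≤ 2 ^ q := Nat.one_le_two_pow
    push_cast [this]
    ring
  rw [hcast] at hup
  nlinarith [hlow, hup]

/-- Randomised verifier lower bound: if `f` depends on all its variables and
`(A,B,T)` is a valid debate system for `f`, then any randomised decision tree
(a finitely supported distribution over deterministic trees) that computes the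
verifier function correctly with probability at least `2/3` on every input `x`
and every valid transcript for `x` must make at least `log₂ n - 3` queries in
the worst case. -/
theorem stmt_14 (n k q : ℕ) (f : (Fin n → Bool) → Bool)
    (hdep : ∀ i : Fin n, DependsOnVar f i)
    (A B : (Fin n → Bool) → List Bool → Bool) (T : DT (n + 2 * k))
    (hsys : ValidSystem n k f A B T)
    (R : Type) [Fintype R] (trees : R → DT (n + 2 * k)) (wt : R → ℝ)
    (hwt : ∀ r, 0 ≤ wt r) (hsum : ∑ r : R, wt r = 1)
    (hdepth : ∀ r, (trees r).depth ≤ q)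
    (hcorrect : ∀ (x : Fin n → Bool) (tr : List Bool),
      ValidTranscript n k f A B x tr →
      2 / 3 ≤ ∑ r ∈ Finset.univ.filter
        (fun r => (trees r).eval (assemble n k x tr) = T.eval (assemble n k x tr)),
        wt r) :
    Real.logb 2 n - 3 ≤ (q : ℝ) := by
  classical
  -- Step 1: for each coordinate, a pair of inputs differing only at `i`
  have hpair : ∀ i : Fin n, ∃ w : Fin n → Bool, f w = false ∧
      f (Function.update w i (! w i)) = true := by
    intro i
    obtain ⟨x, hx⟩ := hdep i
    by_cases hfx : f x = false
    · refine ⟨x, hfx, ?_⟩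
      cases hfu : f (Function.update x i (!x i)) with
      | false => exact absurd (hfx.trans hfu.symm) hx
      | true => rfl
    · have hfx' : f x = true := by
        cases h : f x
        · exact absurd h hfx
        · rfl
      refine ⟨Function.update x i (!x i), ?_, ?_⟩
      · cases hfu : f (Function.update x i (!x i)) with
        | false => rfl
        | true => exact absurd (hfx'.trans hfu.symm) hx
      · have hxx : Function.update (Function.update x i (!x i)) i
            (!(Function.update x i (!x i)) i) = x := by
          funext j
          by_cases hj : j = i
          · subst hj; simp
          · simp [Function.update_of_ne hj]
        rw [hxx, hfx']
  choose w hw0 hw1 using hpair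
  -- Step 2: honest-vs-honest transcripts
  have hnm : n ≤ n + 2 * k := Nat.le_add_right n (2 * k)
  set w' : Fin n → Fin n → Bool :=
    fun i => Function.update (w i) i (!(w i i)) with hw'
  set tr : Fin n → List Bool := fun i => play (A (w i)) (B (w' i)) k with htr
  set y0 : Fin n → Fin (n + 2 * k) → Bool :=
    fun i => assemble n k (w i) (tr i) with hy0
  set y1 : Fin n → Fin (n + 2 * k) → Bool :=
    fun i => assemble n k (w' i) (tr i) with hy1
  have hT0 : ∀ i, T.eval (y0 i) = false := fun i => (hsys (w i)).1 (hw0 i) (B (w' i))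
  have hT1 : ∀ i, T.eval (y1 i) = true := fun i => (hsys (w' i)).2 (hw1 i) (A (w i))
  -- Step 3: correctness of the randomised tree on these inputs
  have h0 : ∀ i, 2/3 ≤ ∑ r ∈ Finset.univ.filter
      (fun r => (trees r).eval (y0 i) = false), wt r := by
    intro i
    have hv : ValidTranscript n k f A B (w i) (tr i) :=
      Or.inl ⟨hw0 i, B (w' i), rfl⟩
    have := hcorrect (w i) (tr i) hv
    have he : assemble n k (w i) (tr i) = y0 i := rfl
    rw [he, hT0 i] at this
    exact this
  have h1 : ∀ i, 2/3 ≤ ∑ r ∈ Finset.univ.filter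
      (fun r => (trees r).eval (y1 i) = true), wt r := by
    intro i
    have hv : ValidTranscript n k f A B (w' i) (tr i) :=
      Or.inr ⟨hw1 i, A (w i), rfl⟩
    have := hcorrect (w' i) (tr i) hv
    have he : assemble n k (w' i) (tr i) = y1 i := rfl
    rw [he, hT1 i] at this
    exact this
  -- Step 4: agreement away from coordinate `i`
  have hagree : ∀ (i : Fin n) (j : Fin (n + 2 * k)),
      j ≠ Fin.castLE hnm i → y0 i j = y1 i j := by
    intro i j hj
    simp only [hy0, hy1, assemble]
    by_cases hjn : (j : ℕ) < n
    · simp only [dif_pos hjn]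
      have : (⟨(j : ℕ), hjn⟩ : Fin n) ≠ i := by
        intro hcon
        apply hj
        apply Fin.ext
        simpa using congrArg Fin.val hcon
      show w i ⟨(j : ℕ), hjn⟩ = Function.update (w i) i (!(w i i)) ⟨(j : ℕ), hjn⟩
      rw [Function.update_of_ne this]
    · simp only [dif_neg hjn]
  -- Step 5: Yao counting
  have key : (n : ℝ) ≤ 3 * 2 ^ q :=
    yao_count hnm R trees wt hwt hsum hdepth y0 y1 hagree h0 h1
  -- Step 6: conclude via logarithms
  rcases Nat.eq_zero_or_pos n with hn | hn
  · subst hn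
    simp only [Nat.cast_zero, Real.logb_zero]
    have : (0 : ℝ) ≤ q := Nat.cast_nonneg q
    linarith
  · have hn1 : (1 : ℝ) ≤ (n : ℝ) := by exact_mod_cast hn
    have key2 : (n : ℝ) ≤ 2 ^ (q + 3) := by
      have : (3 : ℝ) * 2 ^ q ≤ 8 * 2 ^ q := by
        have : (0 : ℝ) < 2 ^ q := by positivity
        linarith
      calc (n : ℝ) ≤ 3 * 2 ^ q := key
        _ ≤ 8 * 2 ^ q := this
        _ = 2 ^ (q + 3) := by ring
    have hlog : Real.logb 2 (n : ℝ) ≤ Real.logb 2 (2 ^ (q + 3)) :=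
      Real.logb_le_logb_of_le (by norm_num) (by linarith) key2
    have hpow : Real.logb 2 ((2 : ℝ) ^ (q + 3)) = ((q + 3 : ℕ) : ℝ) := by
      rw [show ((2 : ℝ) ^ (q + 3)) = (2 : ℝ) ^ ((q + 3 : ℕ) : ℝ) from
        (Real.rpow_natCast 2 (q + 3)).symm]
      exact Real.logb_rpow (by norm_num) (by norm_num)
    rw [hpow] at hlog
    push_cast at hlog
    linarith
end
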